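/- If ζ : Σ → 2^{SP(Δ)} is an atomic substitution, then for every sp-pomset U ∈ SP(Δ) there exists at most one word w ∈ Σ* such that U ∈ ζ(w). -/

import Mathlib

namespace WBKA

/-- Series-parallel terms over an alphabet `A`. -/
inductive SPTerm (A : Type) : Type
  | one : SPTerm A
  | atom : A → SPTerm A
  | seq : SPTerm A → SPTerm A → SPTerm A
  | par : SPTerm A → SPTerm A → SPTerm A

/-- The congruence generated by the series-parallel pomset axioms:
associativity of both compositions, commutativity of parallel composition,
and the empty pomset acting as unit for both. -/
inductive SPEquiv {A : Type} : SPTerm A → SPTerm A → Prop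
  | refl (u : SPTerm A) : SPEquiv u u
  | symm {u v : SPTerm A} : SPEquiv u v → SPEquiv v u
  | trans {u v w : SPTerm A} : SPEquiv u v → SPEquiv v w → SPEquiv u w
  | seqCongr {u u' v v' : SPTerm A} :
      SPEquiv u u' → SPEquiv v v' → SPEquiv (u.seq v) (u'.seq v')
  | parCongr {u u' v v' : SPTerm A} :
      SPEquiv u u' → SPEquiv v v' → SPEquiv (u.par v) (u'.par v')
  | seqAssoc (u v w : SPTerm A) : SPEquiv ((u.seq v).seq w) (u.seq (v.seq w))
  | parAssoc (u v w : SPTerm A) : SPEquiv ((u.par v).par w) (u.par (v.par w))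
  | parComm (u v : SPTerm A) : SPEquiv (u.par v) (v.par u)
  | seqOneLeft (u : SPTerm A) : SPEquiv (SPTerm.one.seq u) u
  | seqOneRight (u : SPTerm A) : SPEquiv (u.seq SPTerm.one) u
  | parOne (u : SPTerm A) : SPEquiv (u.par SPTerm.one) u

instance spSetoid (A : Type) : Setoid (SPTerm A) :=
  ⟨SPEquiv, SPEquiv.refl, SPEquiv.symm, SPEquiv.trans⟩

/-- Series-parallel pomsets over `A`, as the free algebra on the sp-pomset axioms. -/
def Pomset (A : Type) : Type := Quotient (spSetoid A)

namespace Pomset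

variable {A : Type}

def mk (u : SPTerm A) : Pomset A := Quotient.mk (spSetoid A) u

/-- The empty pomset `1`. -/
def eps : Pomset A := mk SPTerm.one

/-- The primitive pomset consisting of a single event labelled `a`. -/
def atom (a : A) : Pomset A := mk (SPTerm.atom a)

/-- Sequential composition of pomsets. -/
def seq : Pomset A → Pomset A → Pomset A :=
  Quotient.lift₂ (fun u v => mk (u.seq v))
    (fun _ _ _ _ hu hv => Quotient.sound (SPEquiv.seqCongr hu hv))

/-- Parallel composition of pomsets. -/
def par : Pomset A → Pomset A → Pomset A :=
  Quotient.lift₂ (fun u v => mk (u.par v))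
    (fun _ _ _ _ hu hv => Quotient.sound (SPEquiv.parCongr hu hv))

/-- `U` is the empty pomset. -/
def IsEmptyP (U : Pomset A) : Prop := U = eps

/-- `U` is primitive: it consists of a single labelled event. -/
def Primitive (U : Pomset A) : Prop := ∃ a : A, U = atom a

/-- `U` is sequential: a sequential composition of two non-empty pomsets. -/
def Sequential (U : Pomset A) : Prop :=
  ∃ V W : Pomset A, V ≠ eps ∧ W ≠ eps ∧ U = seq V W

/-- `U` is parallel: a parallel composition of two non-empty pomsets. -/
def Parallel (U : Pomset A) : Prop :=
  ∃ V W : Pomset A, V ≠ eps ∧ W ≠ eps ∧ U = par V W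

/-- `U` is a sequential prime. -/
def SeqPrime (U : Pomset A) : Prop :=
  U ≠ eps ∧ ∀ V W : Pomset A, U = seq V W → V = eps ∨ W = eps

/-- `U` is a parallel prime. -/
def ParPrime (U : Pomset A) : Prop :=
  U ≠ eps ∧ ∀ V W : Pomset A, U = par V W → V = eps ∨ W = eps

/-- Sequential product of a list of pomsets. -/
def seqProd (l : List (Pomset A)) : Pomset A := l.foldr seq eps

/-- Parallel product of a list of pomsets. -/
def parProd (l : List (Pomset A)) : Pomset A := l.foldr par eps

end Pomset

/-- Pointwise sequential composition of pomset languages. -/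
def langSeq {A : Type} (L M : Set (Pomset A)) : Set (Pomset A) :=
  Set.image2 Pomset.seq L M

/-- Pointwise parallel composition of pomset languages. -/
def langPar {A : Type} (L M : Set (Pomset A)) : Set (Pomset A) :=
  Set.image2 Pomset.par L M

/-- `n`-fold sequential power of a language. -/
def langPow {A : Type} (L : Set (Pomset A)) : ℕ → Set (Pomset A)
  | 0 => {Pomset.eps}
  | n + 1 => langSeq L (langPow L n)

/-- Kleene closure of a pomset language. -/
def langStar {A : Type} (L : Set (Pomset A)) : Set (Pomset A) :=
  ⋃ n : ℕ, langPow L n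

/-- Series-rational expressions over `A`. -/
inductive SR (A : Type) : Type
  | zero : SR A
  | one : SR A
  | atom : A → SR A
  | plus : SR A → SR A → SR A
  | seq : SR A → SR A → SR A
  | par : SR A → SR A → SR A
  | star : SR A → SR A

/-- The sp-language semantics of series-rational expressions. -/
def sem {A : Type} : SR A → Set (Pomset A)
  | .zero => ∅
  | .one => {Pomset.eps}
  | .atom a => {Pomset.atom a}
  | .plus e f => sem e ∪ sem f
  | .seq e f => langSeq (sem e) (sem f)
  | .par e f => langPar (sem e) (sem f)
  | .star e => langStar (sem e)

/-- The syntactic predicate `F` characterising acceptance of the empty pomset. -/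
inductive EF {A : Type} : SR A → Prop
  | one : EF SR.one
  | plusLeft {e : SR A} (f : SR A) : EF e → EF (SR.plus e f)
  | plusRight (e : SR A) {f : SR A} : EF f → EF (SR.plus e f)
  | seq {e f : SR A} : EF e → EF f → EF (SR.seq e f)
  | par {e f : SR A} : EF e → EF f → EF (SR.par e f)
  | star (e : SR A) : EF (SR.star e)

/-- Pomset automata. -/
structure PA (A : Type) (Q : Type) where
  acc : Set Q
  δ : Q → A → Set Q
  γ : Q → Multiset Q → Set Q

/-- The run relation of a pomset automaton. -/
inductive Run {A Q : Type} (M : PA A Q) : Q → Pomset A → Q → Prop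
  | triv (q : Q) : Run M q Pomset.eps q
  | seqUnit {q : Q} {a : A} {q' : Q} :
      q' ∈ M.δ q a → Run M q (Pomset.atom a) q'
  | comp {q : Q} {U : Pomset A} {q'' : Q} {V : Pomset A} {q' : Q} :
      Run M q U q'' → Run M q'' V q' → Run M q (U.seq V) q'
  | parUnit {q q' : Q} (l : List (Q × Pomset A × Q)) :
      q' ∈ M.γ q (↑(l.map Prod.fst) : Multiset Q) →
      (∀ x ∈ l, x.2.2 ∈ M.acc) →
      (∀ x ∈ l, Run M x.1 x.2.1 x.2.2) →
      Run M q (Pomset.parProd (l.map fun x => x.2.1)) q'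

/-- Language of a state of a pomset automaton. -/
def PA.lang {A Q : Type} (M : PA A Q) (q : Q) : Set (Pomset A) :=
  {U | ∃ q' ∈ M.acc, Run M q U q'}

/-- The triple `q →^U q'` matches the trivial-run rule. -/
def TrivialRun {A Q : Type} (_M : PA A Q) (q : Q) (U : Pomset A) (q' : Q) : Prop :=
  U = Pomset.eps ∧ q = q'

/-- `q →^U q'` is a sequential unit run. -/
def SeqUnitRun {A Q : Type} (M : PA A Q) (q : Q) (U : Pomset A) (q' : Q) : Prop :=
  ∃ a : A, U = Pomset.atom a ∧ q' ∈ M.δ q a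

/-- `q →^U q'` is a parallel unit run. -/
def ParUnitRun {A Q : Type} (M : PA A Q) (q : Q) (U : Pomset A) (q' : Q) : Prop :=
  ∃ l : List (Q × Pomset A × Q),
    q' ∈ M.γ q (↑(l.map Prod.fst) : Multiset Q) ∧
    (∀ x ∈ l, x.2.2 ∈ M.acc ∧ Run M x.1 x.2.1 x.2.2) ∧
    U = Pomset.parProd (l.map fun x => x.2.1)

/-- `q →^U q'` is a unit run: a sequential or a parallel unit run. -/
def UnitRun {A Q : Type} (M : PA A Q) (q : Q) (U : Pomset A) (q' : Q) : Prop :=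
  SeqUnitRun M q U q' ∨ ParUnitRun M q U q'

/-- `q →^U q'` is a composite run: a sequential composition of two non-trivial runs. -/
def CompositeRun {A Q : Type} (M : PA A Q) (q : Q) (U : Pomset A) (q' : Q) : Prop :=
  ∃ (V W : Pomset A) (q'' : Q),
    U = V.seq W ∧ Run M q V q'' ∧ Run M q'' W q' ∧
    ¬ TrivialRun M q V q'' ∧ ¬ TrivialRun M q'' W q'

/-- The support preorder: `Supports M q' q` means `q' ⪯ q`. -/
inductive Supports {A Q : Type} (M : PA A Q) : Q → Q → Prop
  | refl (q : Q) : Supports M q q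
  | trans {q r p : Q} : Supports M q r → Supports M r p → Supports M q p
  | deltaStep {q : Q} {a : A} {q' : Q} : q' ∈ M.δ q a → Supports M q' q
  | gammaStep {q : Q} {φ : Multiset Q} {q' : Q} : q' ∈ M.γ q φ → Supports M q' q
  | forkStep {q : Q} {φ : Multiset Q} {r : Q} :
      r ∈ φ → (M.γ q φ).Nonempty → Supports M r q

/-- A pomset automaton is fork-acyclic when every fork target `r` of `q`
satisfies `r ≺ q`, i.e. `q ⋠ r`. -/
def ForkAcyclic {A Q : Type} (M : PA A Q) : Prop :=
  ∀ (q : Q) (φ : Multiset Q) (r : Q),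
    r ∈ φ → (M.γ q φ).Nonempty → ¬ Supports M q r

/-- A set of states is support-closed. -/
def SupportClosed {A Q : Type} (M : PA A Q) (S : Set Q) : Prop :=
  ∀ q ∈ S, ∀ q' : Q, Supports M q' q → q' ∈ S

/-- Restriction of a pomset automaton to a set of states. -/
def PA.restrict {A Q : Type} (M : PA A Q) (S : Set Q) : PA A {q : Q // q ∈ S} where
  acc := {q | q.val ∈ M.acc}
  δ := fun q a => {r | r.val ∈ M.δ q.val a}
  γ := fun q φ => {r | r.val ∈ M.γ q.val (φ.map Subtype.val)}

/-- `n`-forking automata. -/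
def NForking {A Q : Type} (M : PA A Q) (n : ℕ) : Prop :=
  ∀ (q : Q) (φ : Multiset Q), (M.γ q φ).Nonempty → n ≤ Multiset.card φ

/-- Parsimonious automata: no fork target accepts the empty pomset. -/
def Parsimonious {A Q : Type} (M : PA A Q) : Prop :=
  ∀ (p : Q) (φ : Multiset Q) (q : Q),
    q ∈ φ → (M.γ p φ).Nonempty → Pomset.eps ∉ M.lang q

/-- Flat-branching automata: forks from fork targets never reach accepting states. -/
def FlatBranching {A Q : Type} (M : PA A Q) : Prop :=
  ∀ (p : Q) (φ : Multiset Q) (q : Q),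
    q ∈ φ → (M.γ p φ).Nonempty → ∀ ψ : Multiset Q, M.γ q ψ ∩ M.acc = ∅

/-- Well-structured pomset automata. -/
def WellStructured {A Q : Type} (M : PA A Q) : Prop :=
  (∀ (q : Q) (φ : Multiset Q), (M.γ q φ).Nonempty → 2 ≤ Multiset.card φ) ∧
  ∀ (p : Q) (φ : Multiset Q) (q : Q), q ∈ φ → (M.γ p φ).Nonempty →
    q ∉ M.acc ∧ ∀ ψ : Multiset Q, M.γ q ψ ∩ M.acc = ∅

/-- The relation `⇝` characterising runs labelled by the empty pomset. -/
inductive Leadsto {A Q : Type} (M : PA A Q) : Q → Q → Prop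
  | refl (p : Q) : Leadsto M p p
  | trans {p r q : Q} : Leadsto M p r → Leadsto M r q → Leadsto M p q
  | fork {p q : Q} (l : List (Q × Q)) :
      q ∈ M.γ p (↑(l.map Prod.fst) : Multiset Q) →
      (∀ x ∈ l, x.2 ∈ M.acc) →
      (∀ x ∈ l, Leadsto M x.1 x.2) →
      Leadsto M p q

/-- Concatenate each expression of a set with `f` on the right. -/
def seqAfter {A : Type} (T : Set (SR A)) (f : SR A) : Set (SR A) :=
  (fun g => SR.seq g f) '' T

/-- Antimirov-style sequential derivatives of sr-expressions. -/
def deltaS {A : Type} : SR A → A → Set (SR A)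
  | .zero, _ => ∅
  | .one, _ => ∅
  | .atom b, a => {g | g = SR.one ∧ a = b}
  | .plus e f, a => deltaS e a ∪ deltaS f a
  | .seq e f, a => seqAfter (deltaS e a) f ∪ {g | g ∈ deltaS f a ∧ EF e}
  | .par _ _, _ => ∅
  | .star e, a => seqAfter (deltaS e a) (SR.star e)

/-- Antimirov-style parallel derivatives of sr-expressions. -/
def gammaS {A : Type} : SR A → Multiset (SR A) → Set (SR A)
  | .zero, _ => ∅
  | .one, _ => ∅
  | .atom _, _ => ∅
  | .plus e f, φ => gammaS e φ ∪ gammaS f φ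
  | .seq e f, φ => seqAfter (gammaS e φ) f ∪ {g | g ∈ gammaS f φ ∧ EF e}
  | .par e f, φ => {g | g = SR.one ∧ φ = {e, f}}
  | .star e, φ => seqAfter (gammaS e φ) (SR.star e)

/-- The syntactic pomset automaton on sr-expressions. -/
def synPA (A : Type) : PA A (SR A) where
  acc := {e | EF e}
  δ := deltaS
  γ := gammaS

/-- The parallel-nesting depth of an sr-expression. -/
def pdepth {A : Type} : SR A → ℕ
  | .zero => 0
  | .one => 0
  | .atom _ => 0
  | .plus e f => max (pdepth e) (pdepth f)
  | .seq e f => max (pdepth e) (pdepth f)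
  | .par e f => max (pdepth e) (pdepth f) + 1
  | .star e => pdepth e

/-- A substitution `ζ : Σ → 2^{SP(Δ)}` is atomic. -/
def Atomic {A B : Type} (ζ : A → Set (Pomset B)) : Prop :=
  (∀ a : A, ∀ U ∈ ζ a, Pomset.SeqPrime U) ∧
  (∀ a b : A, (ζ a ∩ ζ b).Nonempty ↔ a = b)

/-- Extension of a substitution to words. -/
def substWord {A B : Type} (ζ : A → Set (Pomset B)) : List A → Set (Pomset B)
  | [] => {Pomset.eps}
  | a :: w => langSeq (ζ a) (substWord ζ w)

/-- Extension of a substitution to word languages. -/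
def substLang {A B : Type} (ζ : A → Set (Pomset B)) (L : Set (List A)) :
    Set (Pomset B) :=
  ⋃ w ∈ L, substWord ζ w

/-- `L_A(α)` for a set `α` of states: the atom language of `α`. -/
def atomLang {Q U : Type} (LA : Q → Set U) (α : Set Q) : Set U :=
  (⋂ q ∈ α, LA q) \ (⋃ (q : Q) (_ : q ∉ α), LA q)


section Factorisation

variable {B : Type}

lemma mk_eq_mk {u v : SPTerm B} (h : SPEquiv u v) : Pomset.mk u = Pomset.mk v :=
  Quotient.sound h

/-- Number of atoms of a term. -/
def spsize : SPTerm B → ℕ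
  | .one => 0
  | .atom _ => 1
  | .seq u v => spsize u + spsize v
  | .par u v => spsize u + spsize v

lemma spsize_equiv {u v : SPTerm B} (h : SPEquiv u v) : spsize u = spsize v := by
  induction h <;> simp_all [spsize] <;> omega

/-- Size on pomsets. -/
def psize : Pomset B → ℕ := Quotient.lift spsize fun _ _ h => spsize_equiv h

@[simp] lemma psize_mk (u : SPTerm B) : psize (Pomset.mk u) = spsize u := rfl

@[simp] lemma psize_eps : psize (Pomset.eps : Pomset B) = 0 := rfl

@[simp] lemma psize_seq (U V : Pomset B) : psize (U.seq V) = psize U + psize V := by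
  induction U using Quotient.inductionOn
  induction V using Quotient.inductionOn
  rfl

lemma equiv_one_of_spsize_zero : ∀ {u : SPTerm B}, spsize u = 0 → SPEquiv u SPTerm.one := by
  intro u
  induction u with
  | one => intro _; exact SPEquiv.refl _
  | atom a => simp [spsize]
  | seq u v ihu ihv =>
    intro h
    simp only [spsize, Nat.add_eq_zero] at h
    exact SPEquiv.trans (SPEquiv.seqCongr (ihu h.1) (ihv h.2)) (SPEquiv.seqOneLeft _)
  | par u v ihu ihv =>
    intro h
    simp only [spsize, Nat.add_eq_zero] at h
    exact SPEquiv.trans (SPEquiv.parCongr (ihu h.1) (ihv h.2)) (SPEquiv.parOne _)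

lemma psize_eq_zero_iff {U : Pomset B} : psize U = 0 ↔ U = Pomset.eps := by
  induction U using Quotient.inductionOn with
  | _ u =>
    constructor
    · intro h; exact mk_eq_mk (equiv_one_of_spsize_zero h)
    · intro h
      have : psize (Pomset.mk u) = psize (Pomset.eps : Pomset B) := congrArg psize h
      exact this

lemma equiv_par_right (v : SPTerm B) {w : SPTerm B} (hw : spsize w = 0) :
    SPEquiv (v.par w) v :=
  SPEquiv.trans (SPEquiv.parCongr (SPEquiv.refl v) (equiv_one_of_spsize_zero hw))
    (SPEquiv.parOne v)

lemma equiv_par_left (v : SPTerm B) {w : SPTerm B} (hw : spsize w = 0) :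
    SPEquiv (w.par v) v :=
  SPEquiv.trans (SPEquiv.parComm _ _) (equiv_par_right v hw)

/-- Sequential factors of a term. -/
def sfac : SPTerm B → List (Pomset B)
  | .one => []
  | .atom a => [Pomset.atom a]
  | .seq u v => sfac u ++ sfac v
  | .par u v =>
      if spsize v = 0 then sfac u
      else if spsize u = 0 then sfac v
      else [Pomset.mk (u.par v)]

lemma sfac_of_spsize_zero : ∀ {u : SPTerm B}, spsize u = 0 → sfac u = [] := by
  intro u
  induction u with
  | one => intro _; rfl
  | atom a => simp [spsize]
  | seq u v ihu ihv =>
    intro h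
    simp only [spsize, Nat.add_eq_zero] at h
    simp [sfac, ihu h.1, ihv h.2]
  | par u v ihu ihv =>
    intro h
    simp only [spsize, Nat.add_eq_zero] at h
    simp [sfac, h.1, h.2, ihu h.1]

lemma psize_pos_of_mem_sfac : ∀ {u : SPTerm B} {X : Pomset B}, X ∈ sfac u → 0 < psize X := by
  intro u
  induction u with
  | one => intro X hX; simp [sfac] at hX
  | atom a => intro X hX; simp [sfac] at hX; subst hX; simp [Pomset.atom, spsize]
  | seq u v ihu ihv =>
    intro X hX
    simp only [sfac, List.mem_append] at hX
    rcases hX with h | h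
    · exact ihu h
    · exact ihv h
  | par u v ihu ihv =>
    intro X hX
    simp only [sfac] at hX
    split_ifs at hX with h1 h2
    · exact ihu hX
    · exact ihv hX
    · simp at hX
      subst hX
      simp [spsize]
      omega

lemma sfac_equiv {u v : SPTerm B} (h : SPEquiv u v) : sfac u = sfac v := by
  induction h with
  | refl u => rfl
  | symm _ ih => exact ih.symm
  | trans _ _ ih1 ih2 => exact ih1.trans ih2
  | seqCongr _ _ ih1 ih2 => simp [sfac, ih1, ih2]
  | @parCongr u u' v v' hu hv ih1 ih2 =>
    simp only [sfac]
    rw [spsize_equiv hu, spsize_equiv hv, ih1, ih2, mk_eq_mk (SPEquiv.parCongr hu hv)]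
  | seqAssoc u v w => simp [sfac, List.append_assoc]
  | parAssoc u v w =>
    simp only [sfac, spsize]
    by_cases hu : spsize u = 0 <;> by_cases hv : spsize v = 0 <;> by_cases hw : spsize w = 0
    · simp [hu, hv, hw, Nat.add_eq_zero]
    · simp [hu, hv, hw, Nat.add_eq_zero]
    · simp [hu, hv, hw, Nat.add_eq_zero]
    · simp [hu, hv, hw, Nat.add_eq_zero]
      exact mk_eq_mk (SPEquiv.parCongr (equiv_par_left v hu) (SPEquiv.refl w))
    · simp [hu, hv, hw, Nat.add_eq_zero]
    · simp [hu, hv, hw, Nat.add_eq_zero]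
      exact mk_eq_mk (SPEquiv.parAssoc u v w)
    · simp [hu, hv, hw, Nat.add_eq_zero]
      exact mk_eq_mk (SPEquiv.parCongr (SPEquiv.refl u) (SPEquiv.symm (equiv_par_right v hw)))
    · simp [hu, hv, hw, Nat.add_eq_zero]
      exact mk_eq_mk (SPEquiv.parAssoc u v w)
  | parComm u v =>
    simp only [sfac]
    by_cases hu : spsize u = 0 <;> by_cases hv : spsize v = 0
    · rw [if_pos hv, if_pos hu, sfac_of_spsize_zero hu, sfac_of_spsize_zero hv]
    · rw [if_neg hv, if_pos hu, if_pos hu]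
    · rw [if_pos hv, if_neg hu, if_pos hv]
    · rw [if_neg hv, if_neg hu, if_neg hu, if_neg hv]
      exact congrArg (fun X => [X]) (mk_eq_mk (SPEquiv.parComm u v))
  | seqOneLeft u => simp [sfac]
  | seqOneRight u => simp [sfac]
  | parOne u => simp [sfac, spsize]

/-- Sequential factors of a pomset. -/
def facs : Pomset B → List (Pomset B) := Quotient.lift sfac fun _ _ h => sfac_equiv h

@[simp] lemma facs_mk (u : SPTerm B) : facs (Pomset.mk u) = sfac u := rfl

@[simp] lemma facs_eps : facs (Pomset.eps : Pomset B) = [] := rfl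

@[simp] lemma facs_seq (U V : Pomset B) : facs (U.seq V) = facs U ++ facs V := by
  induction U using Quotient.inductionOn
  induction V using Quotient.inductionOn
  rfl

lemma psize_pos_of_mem_facs {U X : Pomset B} (h : X ∈ facs U) : 0 < psize X := by
  induction U using Quotient.inductionOn with
  | _ u => exact psize_pos_of_mem_sfac h

lemma seq_eps_right (U : Pomset B) : U.seq Pomset.eps = U := by
  induction U using Quotient.inductionOn with
  | _ u => exact mk_eq_mk (SPEquiv.seqOneRight u)

lemma seq_eps_left (U : Pomset B) : (Pomset.eps : Pomset B).seq U = U := by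
  induction U using Quotient.inductionOn with
  | _ u => exact mk_eq_mk (SPEquiv.seqOneLeft u)

lemma seq_assoc (U V W : Pomset B) : (U.seq V).seq W = U.seq (V.seq W) := by
  induction U using Quotient.inductionOn
  induction V using Quotient.inductionOn
  induction W using Quotient.inductionOn
  exact mk_eq_mk (SPEquiv.seqAssoc _ _ _)

@[simp] lemma seqProd_nil : Pomset.seqProd ([] : List (Pomset B)) = Pomset.eps := rfl

@[simp] lemma seqProd_cons (X : Pomset B) (l : List (Pomset B)) :
    Pomset.seqProd (X :: l) = X.seq (Pomset.seqProd l) := rfl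

lemma seqProd_sfac : ∀ u : SPTerm B, Pomset.seqProd (sfac u) = Pomset.mk u := by
  intro u
  induction u with
  | one => rfl
  | atom a => simp [sfac, seq_eps_right]; rfl
  | seq u v ihu ihv =>
    simp only [sfac]
    have happ : ∀ l₁ l₂ : List (Pomset B),
        Pomset.seqProd (l₁ ++ l₂) = (Pomset.seqProd l₁).seq (Pomset.seqProd l₂) := by
      intro l₁ l₂
      induction l₁ with
      | nil => simp [seq_eps_left]
      | cons x t ih => simp [ih, seq_assoc]
    rw [happ, ihu, ihv]
    rfl
  | par u v ihu ihv =>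
    simp only [sfac]
    split_ifs with h1 h2
    · rw [ihu, mk_eq_mk (equiv_par_right u h1)]
    · rw [ihv, mk_eq_mk (equiv_par_left v h2)]
    · simp [seq_eps_right]

lemma seqProd_facs (U : Pomset B) : Pomset.seqProd (facs U) = U := by
  induction U using Quotient.inductionOn with
  | _ u => exact seqProd_sfac u

lemma facs_of_seqPrime {U : Pomset B} (h : Pomset.SeqPrime U) : facs U = [U] := by
  obtain ⟨hne, hpr⟩ := h
  have he := seqProd_facs U
  match hl : facs U with
  | [] =>
    rw [hl] at he
    exact absurd he.symm hne
  | [X] =>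
    rw [hl] at he
    simp only [seqProd_cons, seqProd_nil, seq_eps_right] at he
    rw [he]
  | X :: Y :: r =>
    exfalso
    rw [hl] at he
    simp only [seqProd_cons] at he
    rcases hpr X ((Y.seq (Pomset.seqProd r))) he.symm with hc | hc
    · have : 0 < psize X := psize_pos_of_mem_facs (by rw [hl]; simp)
      rw [hc] at this; simp at this
    · have hY : 0 < psize Y := psize_pos_of_mem_facs (by rw [hl]; simp)
      have : psize (Y.seq (Pomset.seqProd r)) = 0 := by rw [hc]; simp
      rw [psize_seq] at this
      omega

lemma facs_inj {U V : Pomset B} (h : facs U = facs V) : U = V := by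
  rw [← seqProd_facs U, ← seqProd_facs V, h]

end Factorisation

/-- For an atomic substitution, every sp-pomset is in the image of at most one
word. -/
theorem atomic_substitution_unique_word {A B : Type} (ζ : A → Set (Pomset B))
    (hζ : Atomic ζ) (U : Pomset B) (w w' : List A)
    (hw : U ∈ substWord ζ w) (hw' : U ∈ substWord ζ w') : w = w' := by
  induction w generalizing w' U with
  | nil =>
    have hU : U = Pomset.eps := hw
    cases w' with
    | nil => rfl
    | cons b t =>
      obtain ⟨V, hV, W, hW, hVW⟩ := hw'
      exfalso
      have h1 : facs U = [] := by rw [hU]; exact facs_eps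
      have h2 : facs U = V :: facs W := by
        rw [← hVW, facs_seq, facs_of_seqPrime (hζ.1 b V hV)]
        rfl
      rw [h1] at h2
      exact nomatch h2
  | cons a t ih =>
    cases w' with
    | nil =>
      have hU : U = Pomset.eps := hw'
      obtain ⟨V, hV, W, hW, hVW⟩ := hw
      exfalso
      have h1 : facs U = [] := by rw [hU]; exact facs_eps
      have h2 : facs U = V :: facs W := by
        rw [← hVW, facs_seq, facs_of_seqPrime (hζ.1 a V hV)]
        rfl
      rw [h1] at h2
      exact nomatch h2
    | cons b t' =>
      obtain ⟨V, hV, W, hW, hVW⟩ := hw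
      obtain ⟨V', hV', W', hW', hVW'⟩ := hw'
      have e1 : facs U = V :: facs W := by
        rw [← hVW, facs_seq, facs_of_seqPrime (hζ.1 a V hV)]; rfl
      have e2 : facs U = V' :: facs W' := by
        rw [← hVW', facs_seq, facs_of_seqPrime (hζ.1 b V' hV')]; rfl
      rw [e1] at e2
      injection e2 with hVV hWW
      have hab : a = b := (hζ.2 a b).mp ⟨V, hV, hVV ▸ hV'⟩
      have hWWeq : W = W' := facs_inj hWW
      have htt : t = t' := ih W t' hW (hWWeq ▸ hW')
      rw [hab, htt]

end WBKA
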